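/- arXiv:math/0702858 — 5 statements merged into one kernel-verified Lean document; each statement's English description precedes it below -/
import Mathlib

section
/- Let M be an additive commutative monoid with a linear order in which 0 is the least element and addition is monotone in each argument. Consider finitely supported sequences ℕ → M with the lexicographic order: A < B iff A ≠ B and at the smallest index n with A n ≠ B n one has A n < B n. Then pointwise addition of such sequences is monotone for the lexicographic order — i.e., A ≤ B and C ≤ D imply A + C ≤ B + D — if and only if addition in M strictly preserves strict inequality, i.e., for all a, b, c, d in M, a < b and c ≤ d imply a + c < b + d. -/
/-- A sequence is finitely supported if it is eventually zero. -/
def FinSupported {M : Type*} [Zero M] (A : ℕ → M) : Prop :=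
  ∃ N, ∀ n, N ≤ n → A n = 0

/-- The lexicographic order on sequences: `A ≤ B` iff `A = B` or at the smallest index
where they differ, the entry of `A` is smaller. -/
def LexLe {M : Type*} [LinearOrder M] (A B : ℕ → M) : Prop :=
  A = B ∨ ∃ n, (∀ m, m < n → A m = B m) ∧ A n < B n

/-- For `M` a linearly ordered additive commutative monoid with `0` least and
addition monotone in each argument, pointwise addition of finitely supported sequences is
monotone for the lexicographic order iff addition in `M` strictly preserves strict
inequality. -/
theorem pointwise_add_lex_monotone_iff {M : Type*} [AddCommMonoid M] [LinearOrder M]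
    (hbot : ∀ a : M, 0 ≤ a)
    (hmono_left : ∀ a b c : M, a ≤ b → a + c ≤ b + c)
    (hmono_right : ∀ a b c : M, a ≤ b → c + a ≤ c + b) :
    (∀ A B C D : ℕ → M, FinSupported A → FinSupported B → FinSupported C → FinSupported D →
        LexLe A B → LexLe C D → LexLe (A + C) (B + D)) ↔
      (∀ a b c d : M, a < b → c ≤ d → a + c < b + d) := by
  constructor
  · intro h a b c d hab hcd
    set A : ℕ → M := fun n => if n = 0 then a else if n = 1 then b + d else 0 with hA
    set B : ℕ → M := fun n => if n = 0 then b else 0 with hB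
    set C : ℕ → M := fun n => if n = 0 then c else 0 with hC
    set D : ℕ → M := fun n => if n = 0 then d else 0 with hD
    have fsA : FinSupported A := ⟨2, fun n hn => by
      have h0 : n ≠ 0 := by omega
      have h1 : n ≠ 1 := by omega
      simp [hA, h0, h1]⟩
    have fsB : FinSupported B := ⟨2, fun n hn => by
      have h0 : n ≠ 0 := by omega
      simp [hB, h0]⟩
    have fsC : FinSupported C := ⟨2, fun n hn => by
      have h0 : n ≠ 0 := by omega
      simp [hC, h0]⟩
    have fsD : FinSupported D := ⟨2, fun n hn => by
      have h0 : n ≠ 0 := by omega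
      simp [hD, h0]⟩
    have hAB : LexLe A B := Or.inr ⟨0, fun m hm => absurd hm (Nat.not_lt_zero m),
      by simp [hA, hB, hab]⟩
    have hCD : LexLe C D := by
      rcases hcd.lt_or_eq with hlt | heq
      · exact Or.inr ⟨0, fun m hm => absurd hm (Nat.not_lt_zero m), by simp [hC, hD, hlt]⟩
      · exact Or.inl (by funext n; simp [hC, hD, heq])
    have key := h A B C D fsA fsB fsC fsD hAB hCD
    have hb0 : ¬ b + d ≤ 0 := by
      intro hle
      have hbb : b ≤ b + d := by
        have := hmono_right 0 d b (hbot d)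
        simpa using this
      exact absurd (lt_of_lt_of_le hab (hbb.trans hle)) (not_lt.mpr (hbot a))
    rcases key with heq | ⟨n, hlt, hn⟩
    · have h1 := congrFun heq 1
      simp [hA, hB, hC, hD] at h1
      exact absurd h1.le hb0
    · match n with
      | 0 => simpa [hA, hB, hC, hD] using hn
      | 1 =>
        have : b + d + 0 < 0 + 0 := by simpa [hA, hB, hC, hD] using hn
        simp at this
        exact absurd this.le hb0
      | (k+2) =>
        have : (0 : M) < 0 := by
          simpa [hA, hB, hC, hD] using hn
        exact absurd this (lt_irrefl 0)
  · intro hstrict A B C D _ _ _ _ hAB hCD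
    rcases hAB with rfl | ⟨n, hAn, hn⟩
    · rcases hCD with rfl | ⟨m, hCm, hm⟩
      · exact Or.inl rfl
      · refine Or.inr ⟨m, fun k hk => by simp [Pi.add_apply, hCm k hk], ?_⟩
        simpa [Pi.add_apply, add_comm] using hstrict (C m) (D m) (A m) (A m) hm le_rfl
    · rcases hCD with rfl | ⟨m, hCm, hm⟩
      · exact Or.inr ⟨n, fun k hk => by simp [Pi.add_apply, hAn k hk],
          hstrict (A n) (B n) (C n) (C n) hn le_rfl⟩
      · rcases lt_trichotomy n m with hnm | rfl | hmn
        · refine Or.inr ⟨n, fun k hk => by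
            simp [Pi.add_apply, hAn k hk, hCm k (hk.trans hnm)], ?_⟩
          exact hstrict (A n) (B n) (C n) (D n) hn (le_of_eq (hCm n hnm))
        · exact Or.inr ⟨n, fun k hk => by simp [Pi.add_apply, hAn k hk, hCm k hk],
            hstrict (A n) (B n) (C n) (D n) hn hm.le⟩
        · refine Or.inr ⟨m, fun k hk => by
            simp [Pi.add_apply, hAn k (hk.trans hmn), hCm k hk], ?_⟩
          have := hstrict (C m) (D m) (B m) (B m) hm le_rfl
          show A m + C m < B m + D m
          rw [hAn m hmn]
          simpa [add_comm] using this
end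

section
/- Let M be a linearly ordered additive commutative monoid in which addition is strictly monotone (a < b implies a + c < b + c). For a tuple X : Fin n → M let s(X) denote its nonincreasing rearrangement. Then for all A, B : Fin n → M, s(A + B) ≤ s(A) + s(B), where + is pointwise addition and tuples Fin n → M are compared in the lexicographic order (earlier indices have precedence). -/
/-- The nonincreasing rearrangement of a tuple. -/
noncomputable def sortDesc {α : Type*} [LinearOrder α] {n : ℕ} (X : Fin n → α) : Fin n → α :=
  X ∘ Tuple.sort (fun i => OrderDual.toDual (X i))

/-- The lexicographic order on tuples `Fin n → α`, earlier indices having precedence: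
`A ≤ B` iff `A = B` or at the smallest index where they differ, the entry of `A` is
smaller. -/
def LexLeFin {α : Type*} [LinearOrder α] {n : ℕ} (A B : Fin n → α) : Prop :=
  A = B ∨ ∃ i, (∀ j, j < i → A j = B j) ∧ A i < B i

open Equiv Function in
/-- A tuple composed with a permutation making it nonincreasing equals its
nonincreasing rearrangement. -/
lemma comp_eq_sortDesc {M : Type*} [LinearOrder M] {n : ℕ} (A : Fin n → M)
    (π : Equiv.Perm (Fin n)) (h : ∀ i j : Fin n, i ≤ j → A (π j) ≤ A (π i)) :
    A ∘ π = sortDesc A := by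
  set g : Fin n → Mᵒᵈ := fun i => OrderDual.toDual (A i) with hg
  have hmono : Monotone (g ∘ π) := fun i j hij => h i j hij
  have := (Tuple.comp_sort_eq_comp_iff_monotone (f := g) (σ := π)).2 hmono
  funext k
  have := congrFun this k
  simpa [g, sortDesc] using this

/-- the triangle inequality for sorting: in a linearly ordered additive
commutative monoid with strictly monotone addition, `s(A + B) ≤ s(A) + s(B)`
lexicographically, where `s` is the nonincreasing rearrangement. -/
theorem sortDesc_add_le {M : Type*} [AddCommMonoid M] [LinearOrder M]
    (hstrict : ∀ a b c : M, a < b → a + c < b + c)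
    {n : ℕ} (A B : Fin n → M) :
    LexLeFin (sortDesc (A + B)) (sortDesc A + sortDesc B) := by
  classical
  -- the function whose lex maximal value we take
  set F : Equiv.Perm (Fin n) × Equiv.Perm (Fin n) → Lex (Fin n → M) :=
    fun p => toLex (A ∘ p.1 + B ∘ p.2) with hF
  obtain ⟨m, hm, hmax⟩ : ∃ m ∈ Finset.univ.image F, ∀ x ∈ Finset.univ.image F, ¬ m < x := by
    obtain ⟨m, hm⟩ := Finset.exists_maximal (s := Finset.univ.image F)
      ⟨F (1, 1), Finset.mem_image_of_mem F (Finset.mem_univ _)⟩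
    exact ⟨m, hm.1, fun x hx hlt => hlt.not_ge (hm.2 hx hlt.le)⟩
  obtain ⟨p, -, rfl⟩ := Finset.mem_image.1 hm
  have hp' : ∀ q, ¬ F p < F q := fun q h =>
    hmax (F q) (Finset.mem_image_of_mem F (Finset.mem_univ q)) h
  have hlt_iff : ∀ x y : Lex (Fin n → M),
      x < y ↔ ∃ i, (∀ j, j < i → ofLex x j = ofLex y j) ∧ ofLex x i < ofLex y i :=
    fun x y => Iff.rfl
  -- at the maximal pair, A ∘ p.1 is nonincreasing
  have keyA : ∀ i j : Fin n, i < j → A (p.1 j) ≤ A (p.1 i) := by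
    intro i j hij
    by_contra hlt
    push_neg at hlt
    refine hp' (p.1 * Equiv.swap i j, p.2) ((hlt_iff _ _).2 ⟨i, fun l hl => ?_, ?_⟩)
    · have hli : l ≠ i := ne_of_lt hl
      have hlj : l ≠ j := ne_of_lt (hl.trans hij)
      show A (p.1 l) + B (p.2 l) = A (p.1 (Equiv.swap i j l)) + B (p.2 l)
      rw [Equiv.swap_apply_of_ne_of_ne hli hlj]
    · show A (p.1 i) + B (p.2 i) < A (p.1 (Equiv.swap i j i)) + B (p.2 i)
      rw [Equiv.swap_apply_left]
      exact hstrict _ _ _ hlt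
  have keyB : ∀ i j : Fin n, i < j → B (p.2 j) ≤ B (p.2 i) := by
    intro i j hij
    by_contra hlt
    push_neg at hlt
    refine hp' (p.1, p.2 * Equiv.swap i j) ((hlt_iff _ _).2 ⟨i, fun l hl => ?_, ?_⟩)
    · have hli : l ≠ i := ne_of_lt hl
      have hlj : l ≠ j := ne_of_lt (hl.trans hij)
      show A (p.1 l) + B (p.2 l) = A (p.1 l) + B (p.2 (Equiv.swap i j l))
      rw [Equiv.swap_apply_of_ne_of_ne hli hlj]
    · show A (p.1 i) + B (p.2 i) < A (p.1 i) + B (p.2 (Equiv.swap i j i))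
      rw [Equiv.swap_apply_left]
      have h1 : B (p.2 i) + A (p.1 i) < B (p.2 j) + A (p.1 i) := hstrict _ _ _ hlt
      rwa [add_comm (B (p.2 i)), add_comm (B (p.2 j))] at h1
  have hA : A ∘ p.1 = sortDesc A :=
    comp_eq_sortDesc A p.1 (fun i j hij => by
      rcases lt_or_eq_of_le hij with h | rfl
      · exact keyA i j h
      · exact le_rfl)
  have hB : B ∘ p.2 = sortDesc B :=
    comp_eq_sortDesc B p.2 (fun i j hij => by
      rcases lt_or_eq_of_le hij with h | rfl
      · exact keyB i j h
      · exact le_rfl)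
  -- sortDesc (A + B) arises from a diagonal pair
  set σ : Equiv.Perm (Fin n) := Tuple.sort (fun i => OrderDual.toDual ((A + B) i)) with hσ
  have hsum : sortDesc (A + B) = A ∘ σ + B ∘ σ := by
    funext k; simp [sortDesc, σ]
  -- trichotomy for the lexicographic relation
  have htri := (Pi.isTrichotomous_lex (fun _ : Fin n => (· < ·) : ∀ _ : Fin n, M → M → Prop)
    (r := ((· < ·) : Fin n → Fin n → Prop)) (IsWellFounded.wf)).trichotomous
  rcases Classical.or_iff_not_imp_left.2 (fun h1 => Classical.or_iff_not_imp_right.2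
      (htri (sortDesc (A + B)) (sortDesc A + sortDesc B) h1)) with h | h | h
  · obtain ⟨i, h1, h2⟩ := h
    exact Or.inr ⟨i, fun j hj => h1 j hj, h2⟩
  · exact Or.inl h
  · exfalso
    obtain ⟨i, h1, h2⟩ := h
    refine hp' (σ, σ) ((hlt_iff _ _).2 ⟨i, fun l hl => ?_, ?_⟩)
    · show (A ∘ p.1 + B ∘ p.2) l = (A ∘ σ + B ∘ σ) l
      rw [hA, hB, ← hsum]
      exact h1 l hl
    · show (A ∘ p.1 + B ∘ p.2) i < (A ∘ σ + B ∘ σ) i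
      rw [hA, hB, ← hsum]
      exact h2
end

section
/- Let α be a linear order and let M be an m × n matrix with entries in α (a function Fin m → Fin n → α). Let rowSort(M) be the matrix obtained from M by rearranging each row into nonincreasing order (left to right), and let colSort(M) be the matrix obtained by rearranging each column into nonincreasing order (top to bottom). Then colSort(rowSort(M)) ≤ rowSort(colSort(M)) in the row-major lexicographic order on matrices. -/
/-- Rearrange each row of a matrix into nonincreasing order (left to right). -/
noncomputable def rowSort {α : Type*} [LinearOrder α] {m n : ℕ}
    (M : Fin m → Fin n → α) : Fin m → Fin n → α :=
  fun i => sortDesc (M i)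

/-- Rearrange each column of a matrix into nonincreasing order (top to bottom). -/
noncomputable def colSort {α : Type*} [LinearOrder α] {m n : ℕ}
    (M : Fin m → Fin n → α) : Fin m → Fin n → α :=
  fun i j => sortDesc (fun i' => M i' j) i

/-- The row-major lexicographic order on matrices: `M ≤ N` iff `M = N` or, at the first
position (reading rows top to bottom and each row left to right) where they differ,
the entry of `M` is smaller. -/
def MatLexLe {α : Type*} [LinearOrder α] {m n : ℕ} (M N : Fin m → Fin n → α) : Prop :=
  M = N ∨ ∃ i j, (∀ i', i' < i → M i' = N i') ∧ (∀ j', j' < j → M i j' = N i j') ∧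
    M i j < N i j

open Finset

lemma card_filter_val_lt {m c : ℕ} (hc : c ≤ m) :
    ((Finset.univ : Finset (Fin m)).filter (fun i : Fin m => (i : ℕ) < c)).card = c := by
  rcases lt_or_eq_of_le hc with h | h
  · have he : ((Finset.univ : Finset (Fin m)).filter (fun i : Fin m => (i : ℕ) < c)) = Finset.Iio ⟨c, h⟩ := by
      ext i; simp [Fin.lt_def]
    rw [he, Fin.card_Iio]
  · have he : ((Finset.univ : Finset (Fin m)).filter (fun i : Fin m => (i : ℕ) < c)) = Finset.univ := by
      ext i; simp; omega
    rw [he, card_univ, Fintype.card_fin, h]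

lemma sortDesc_antitone {α : Type*} [LinearOrder α] {n : ℕ} (X : Fin n → α) :
    Antitone (sortDesc X) := by
  intro i j hij
  exact Tuple.monotone_sort (fun i => OrderDual.toDual (X i)) hij

lemma card_filter_le_sortDesc {α : Type*} [LinearOrder α] {n : ℕ} (X : Fin n → α) (t : α) :
    ((Finset.univ : Finset (Fin n)).filter (fun j => t ≤ sortDesc X j)).card
      = ((Finset.univ : Finset (Fin n)).filter (fun j => t ≤ X j)).card := by
  set σ := Tuple.sort (fun i => OrderDual.toDual (X i)) with hσ
  have : ((Finset.univ : Finset (Fin n)).filter (fun j => t ≤ sortDesc X j))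
      = ((Finset.univ : Finset (Fin n)).filter (fun j => t ≤ X j)).map σ.symm.toEmbedding := by
    ext i
    simp [sortDesc, Equiv.symm_apply_eq, eq_comm, ← hσ]
  rw [this, Finset.card_map]

lemma le_sortDesc_iff {α : Type*} [LinearOrder α] {n : ℕ} (X : Fin n → α) (t : α) (i : Fin n) :
    t ≤ sortDesc X i ↔ (i : ℕ) < ((Finset.univ : Finset (Fin n)).filter (fun j => t ≤ X j)).card := by
  rw [← card_filter_le_sortDesc X t]
  constructor
  · intro h
    have hsub : (Finset.univ : Finset (Fin n)).filter (fun j : Fin n => (j : ℕ) < (i:ℕ)+1)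
        ⊆ (Finset.univ : Finset (Fin n)).filter (fun j => t ≤ sortDesc X j) := by
      intro j hj
      simp only [Finset.mem_filter, Finset.mem_univ, true_and] at hj ⊢
      exact le_trans h (sortDesc_antitone X (by exact Fin.le_def.mpr (by omega)))
    have := Finset.card_le_card hsub
    rwa [card_filter_val_lt (by exact i.isLt)] at this
  · intro h
    by_contra hc
    have hsub : (Finset.univ : Finset (Fin n)).filter (fun j => t ≤ sortDesc X j)
        ⊆ (Finset.univ : Finset (Fin n)).filter (fun j : Fin n => (j : ℕ) < (i:ℕ)) := by
      intro j hj
      simp only [Finset.mem_filter, Finset.mem_univ, true_and] at hj ⊢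
      by_contra hji
      exact hc (le_trans hj (sortDesc_antitone X (Fin.le_def.mpr (by omega))))
    have := Finset.card_le_card hsub
    rw [card_filter_val_lt (le_of_lt i.isLt)] at this
    omega

section Counts

variable {α : Type*} [LinearOrder α] {m n : ℕ} (M : Fin m → Fin n → α) (t : α)

/-- the number of entries `≥ t` in row `i` of `M` -/
noncomputable def rCnt (i : Fin m) : ℕ :=
  ((Finset.univ : Finset (Fin n)).filter (fun j => t ≤ M i j)).card

/-- the number of entries `≥ t` in column `j` of `M` -/
noncomputable def sCnt (j : Fin n) : ℕ :=
  ((Finset.univ : Finset (Fin m)).filter (fun i => t ≤ M i j)).card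

lemma rCnt_le (i : Fin m) : rCnt M t i ≤ n := by
  classical
  simpa [rCnt] using Finset.card_filter_le (Finset.univ : Finset (Fin n)) _

lemma le_A_iff (i : Fin m) (j : Fin n) :
    t ≤ colSort (rowSort M) i j ↔ (j : ℕ) < sortDesc (rCnt M t) i := by
  have h1 : t ≤ colSort (rowSort M) i j
      ↔ (i : ℕ) < ((Finset.univ : Finset (Fin m)).filter (fun i' => t ≤ rowSort M i' j)).card :=
    le_sortDesc_iff (fun i' => rowSort M i' j) t i
  have h2 : ∀ i' : Fin m, (t ≤ rowSort M i' j ↔ (j : ℕ) + 1 ≤ rCnt M t i') := by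
    intro i'
    rw [Nat.add_one_le_iff.symm.symm]
    exact (le_sortDesc_iff (M i') t j).trans (by rw [Nat.lt_iff_add_one_le]; rfl)
  have h3 : ((Finset.univ : Finset (Fin m)).filter (fun i' => t ≤ rowSort M i' j))
      = ((Finset.univ : Finset (Fin m)).filter (fun i' => (j : ℕ) + 1 ≤ rCnt M t i')) := by
    apply Finset.filter_congr
    intro i' _
    exact (by simpa using (h2 i'))
  have h4 : (j : ℕ) + 1 ≤ sortDesc (rCnt M t) i
      ↔ (i : ℕ) < ((Finset.univ : Finset (Fin m)).filter (fun i' => (j : ℕ) + 1 ≤ rCnt M t i')).card :=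
    le_sortDesc_iff (rCnt M t) ((j : ℕ) + 1) i
  rw [h1, h3, ← h4, Nat.add_one_le_iff]

lemma acnt_eq (i : Fin m) :
    ((Finset.univ : Finset (Fin n)).filter (fun j => t ≤ colSort (rowSort M) i j)).card
      = sortDesc (rCnt M t) i := by
  have h : ((Finset.univ : Finset (Fin n)).filter (fun j => t ≤ colSort (rowSort M) i j))
      = ((Finset.univ : Finset (Fin n)).filter (fun j : Fin n => (j : ℕ) < sortDesc (rCnt M t) i)) := by
    apply Finset.filter_congr
    intro j _
    simpa using le_A_iff M t i j
  rw [h]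
  apply card_filter_val_lt
  have : sortDesc (rCnt M t) i = rCnt M t (Tuple.sort (fun i => OrderDual.toDual (rCnt M t i)) i) := rfl
  rw [this]
  exact rCnt_le M t _

lemma bcnt_eq (i : Fin m) :
    ((Finset.univ : Finset (Fin n)).filter (fun j => t ≤ rowSort (colSort M) i j)).card
      = ((Finset.univ : Finset (Fin n)).filter (fun j => (i : ℕ) < sCnt M t j)).card := by
  have h0 : ((Finset.univ : Finset (Fin n)).filter (fun j => t ≤ rowSort (colSort M) i j)).card
      = ((Finset.univ : Finset (Fin n)).filter (fun j => t ≤ colSort M i j)).card :=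
    card_filter_le_sortDesc (colSort M i) t
  rw [h0]
  congr 1
  apply Finset.filter_congr
  intro j _
  simpa [sCnt, colSort] using le_sortDesc_iff (fun i' => M i' j) t i

lemma dominance (i0 : Fin m) :
    ∑ i' ∈ Finset.Iic i0, sortDesc (rCnt M t) i'
      ≤ ∑ i' ∈ Finset.Iic i0,
          ((Finset.univ : Finset (Fin n)).filter (fun j => (i' : ℕ) < sCnt M t j)).card := by
  classical
  set σ := Tuple.sort (fun i => OrderDual.toDual (rCnt M t i)) with hσ
  set I : Finset (Fin m) := (Finset.Iic i0).image σ with hI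
  have hIcard : I.card = (i0 : ℕ) + 1 := by
    rw [hI, Finset.card_image_of_injective _ σ.injective, Fin.card_Iic]
  have hL : ∑ i' ∈ Finset.Iic i0, sortDesc (rCnt M t) i' = ∑ i ∈ I, rCnt M t i := by
    rw [hI, Finset.sum_image (fun a _ b _ h => σ.injective h)]
    rfl
  rw [hL]
  -- expand both sides as double sums and compare columnwise
  have hLexp : ∑ i ∈ I, rCnt M t i
      = ∑ j : Fin n, (I.filter (fun i => t ≤ M i j)).card := by
    have : ∀ i ∈ I, rCnt M t i = ∑ j : Fin n, if t ≤ M i j then 1 else 0 := by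
      intro i _
      exact Finset.card_filter _ _
    rw [Finset.sum_congr rfl this, Finset.sum_comm]
    exact Finset.sum_congr rfl (fun j _ => (Finset.card_filter _ _).symm)
  have hRexp : ∑ i' ∈ Finset.Iic i0,
        ((Finset.univ : Finset (Fin n)).filter (fun j => (i' : ℕ) < sCnt M t j)).card
      = ∑ j : Fin n, ((Finset.Iic i0).filter (fun i' : Fin m => (i' : ℕ) < sCnt M t j)).card := by
    have : ∀ i' ∈ Finset.Iic i0,
        ((Finset.univ : Finset (Fin n)).filter (fun j => (i' : ℕ) < sCnt M t j)).card
          = ∑ j : Fin n, if (i' : ℕ) < sCnt M t j then 1 else 0 := by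
      intro i' _
      exact Finset.card_filter _ _
    rw [Finset.sum_congr rfl this, Finset.sum_comm]
    exact Finset.sum_congr rfl (fun j _ => (Finset.card_filter _ _).symm)
  rw [hLexp, hRexp]
  apply Finset.sum_le_sum
  intro j _
  -- RHS card equals min (i0+1) (sCnt M t j)
  have hRj : ((Finset.Iic i0).filter (fun i' : Fin m => (i' : ℕ) < sCnt M t j))
      = ((Finset.univ : Finset (Fin m)).filter
          (fun i' : Fin m => (i' : ℕ) < min ((i0 : ℕ) + 1) (sCnt M t j))) := by
    ext i'
    simp only [Finset.mem_filter, Finset.mem_Iic, Finset.mem_univ, true_and, Fin.le_def]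
    omega
  have hRcard : ((Finset.Iic i0).filter (fun i' : Fin m => (i' : ℕ) < sCnt M t j)).card
      = min ((i0 : ℕ) + 1) (sCnt M t j) := by
    rw [hRj]
    exact card_filter_val_lt (le_trans (min_le_left _ _) i0.isLt)
  rw [hRcard]
  apply le_min
  · calc (I.filter (fun i => t ≤ M i j)).card ≤ I.card := Finset.card_filter_le _ _
      _ = (i0 : ℕ) + 1 := hIcard
  · apply Finset.card_le_card
    intro i hi
    simp only [Finset.mem_filter] at hi ⊢
    exact ⟨Finset.mem_univ _, hi.2⟩

end Counts

/-- sorting rows first and then columns is lexicographically at most sorting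
columns first and then rows. -/
theorem colSort_rowSort_le_rowSort_colSort {α : Type*} [LinearOrder α] {m n : ℕ}
    (M : Fin m → Fin n → α) :
    MatLexLe (colSort (rowSort M)) (rowSort (colSort M)) := by
  classical
  set A := colSort (rowSort M) with hA
  set B := rowSort (colSort M) with hB
  by_cases hAB : A = B
  · exact Or.inl hAB
  right
  have hSrow : ((Finset.univ : Finset (Fin m)).filter (fun i => A i ≠ B i)).Nonempty := by
    rw [Finset.filter_nonempty_iff]
    by_contra h
    push_neg at h
    exact hAB (funext fun i => h i (Finset.mem_univ i))
  set S : Finset (Fin m) := (Finset.univ : Finset (Fin m)).filter (fun i => A i ≠ B i) with hS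
  set i0 := S.min' hSrow with hi0
  have hi0mem : i0 ∈ S := S.min'_mem hSrow
  have hrowne : A i0 ≠ B i0 := (Finset.mem_filter.mp hi0mem).2
  have hrowlt : ∀ i' : Fin m, i' < i0 → A i' = B i' := by
    intro i' hlt
    by_contra hne
    exact absurd (S.min'_le i' (Finset.mem_filter.mpr ⟨Finset.mem_univ _, hne⟩)) (not_le.mpr hlt)
  have hScol : ((Finset.univ : Finset (Fin n)).filter (fun j => A i0 j ≠ B i0 j)).Nonempty := by
    rw [Finset.filter_nonempty_iff]
    by_contra h
    push_neg at h
    exact hrowne (funext fun j => h j (Finset.mem_univ j))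
  set T : Finset (Fin n) := (Finset.univ : Finset (Fin n)).filter (fun j => A i0 j ≠ B i0 j) with hT
  set j0 := T.min' hScol with hj0
  have hj0mem : j0 ∈ T := T.min'_mem hScol
  have hentryne : A i0 j0 ≠ B i0 j0 := (Finset.mem_filter.mp hj0mem).2
  have hcollt : ∀ j' : Fin n, j' < j0 → A i0 j' = B i0 j' := by
    intro j' hlt
    by_contra hne
    exact absurd (T.min'_le j' (Finset.mem_filter.mpr ⟨Finset.mem_univ _, hne⟩)) (not_le.mpr hlt)
  refine ⟨i0, j0, hrowlt, hcollt, ?_⟩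
  rcases lt_trichotomy (A i0 j0) (B i0 j0) with h | h | h
  · exact h
  · exact absurd h hentryne
  -- derive a contradiction from B i0 j0 < A i0 j0
  exfalso
  set t := A i0 j0 with ht
  -- b-count at row i0 is at most j0
  have hble : ((Finset.univ : Finset (Fin n)).filter (fun j => t ≤ B i0 j)).card ≤ (j0 : ℕ) := by
    have hsub : ((Finset.univ : Finset (Fin n)).filter (fun j => t ≤ B i0 j))
        ⊆ ((Finset.univ : Finset (Fin n)).filter (fun j : Fin n => (j : ℕ) < (j0 : ℕ))) := by
      intro j hj
      simp only [Finset.mem_filter, Finset.mem_univ, true_and] at hj ⊢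
      by_contra hge
      have hj0j : j0 ≤ j := Fin.le_def.mpr (by omega)
      have : B i0 j ≤ B i0 j0 := sortDesc_antitone (colSort M i0) hj0j
      exact absurd (le_trans hj this) (not_le.mpr h)
    calc ((Finset.univ : Finset (Fin n)).filter (fun j => t ≤ B i0 j)).card
        ≤ ((Finset.univ : Finset (Fin n)).filter (fun j : Fin n => (j : ℕ) < (j0 : ℕ))).card :=
          Finset.card_le_card hsub
      _ = (j0 : ℕ) := card_filter_val_lt (le_of_lt j0.isLt)
  -- a-count at row i0 is more than j0
  have hage : (j0 : ℕ) < sortDesc (rCnt M t) i0 := by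
    rw [← le_A_iff M t i0 j0]
  -- counts agree on earlier rows
  have heq : ∀ i' : Fin m, i' < i0 →
      sortDesc (rCnt M t) i'
        = ((Finset.univ : Finset (Fin n)).filter (fun j => (i' : ℕ) < sCnt M t j)).card := by
    intro i' hlt
    rw [← acnt_eq M t i', ← bcnt_eq M t i']
    congr 1
    apply Finset.filter_congr
    intro j _
    rw [← hA, ← hB, hrowlt i' hlt]
  -- sum comparison contradicts dominance
  have hdom := dominance M t i0
  rw [← Finset.Iio_insert i0, Finset.sum_insert (by simp),
    Finset.sum_insert (by simp)] at hdom
  have hsum_eq : ∑ i' ∈ Finset.Iio i0, sortDesc (rCnt M t) i'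
      = ∑ i' ∈ Finset.Iio i0,
          ((Finset.univ : Finset (Fin n)).filter (fun j => (i' : ℕ) < sCnt M t j)).card :=
    Finset.sum_congr rfl (fun i' hi' => heq i' (Finset.mem_Iio.mp hi'))
  have hb0 : ((Finset.univ : Finset (Fin n)).filter (fun j => (i0 : ℕ) < sCnt M t j)).card ≤ (j0 : ℕ) := by
    rw [← bcnt_eq M t i0]
    exact hble
  omega
end

section
/- Let k ≥ 2 and let a : ℕ → ℕ satisfy a(0) = 0, a(1) = 0, and the following: for all i, j with 0 ≤ i, j ≤ k−1, if i + j < k then a(i) + a(j) ≤ a(i+j), and if i + j ≥ k then a(i) + a(j) ≤ a(i+j−k) + a(k). Define g : ℕ → ℕ by g(n) = a(n mod k) + (n div k)·a(k). Then: (1) g(n) = a(n) for all 0 ≤ n ≤ k; (2) g(1) = 0 and g(m+n) ≥ g(m) + g(n) for all m, n; (3) for every f : ℕ → ℕ with f(1) = 0, f(i) = a(i) for 1 ≤ i ≤ k, and f(m+n) ≥ f(m) + f(n) for all m, n ≥ 1, one has g(n) ≤ f(n) for all n ≥ 1. -/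
/-- the minimal 2-fold operad in `(ℕ, max, +)` with starting terms
`0, a 2, …, a k` is given by `g n = a (n % k) + (n / k) * a k`. -/
theorem minimal_operad_formula (k : ℕ) (hk : 2 ≤ k) (a : ℕ → ℕ)
    (ha0 : a 0 = 0) (ha1 : a 1 = 0)
    (hin : ∀ i j, i < k → j < k → i + j < k → a i + a j ≤ a (i + j))
    (hwrap : ∀ i j, i < k → j < k → k ≤ i + j → a i + a j ≤ a (i + j - k) + a k)
    (g : ℕ → ℕ) (hg : ∀ n, g n = a (n % k) + (n / k) * a k) :
    (∀ n, n ≤ k → g n = a n) ∧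
      (g 1 = 0 ∧ ∀ m n, g m + g n ≤ g (m + n)) ∧
      (∀ f : ℕ → ℕ, f 1 = 0 → (∀ i, 1 ≤ i → i ≤ k → f i = a i) →
        (∀ m n, 1 ≤ m → 1 ≤ n → f m + f n ≤ f (m + n)) →
        ∀ n, 1 ≤ n → g n ≤ f n) := by
  have hkpos : 0 < k := by omega
  have part1 : ∀ n, n ≤ k → g n = a n := by
    intro n hn
    rcases lt_or_eq_of_le hn with h | h
    · rw [hg, Nat.mod_eq_of_lt h, Nat.div_eq_of_lt h]; simp
    · subst h; rw [hg, Nat.mod_self, Nat.div_self hkpos, ha0]; simp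
  refine ⟨part1, ⟨?_, ?_⟩, ?_⟩
  · rw [part1 1 (by omega), ha1]
  · intro m n
    rw [hg m, hg n, hg (m + n)]
    have h1 := Nat.mod_add_div' m k
    have h2 := Nat.mod_add_div' n k
    have hr1 : m % k < k := Nat.mod_lt _ hkpos
    have hr2 : n % k < k := Nat.mod_lt _ hkpos
    by_cases hlt : m % k + n % k < k
    · have hmn : m + n = (m % k + n % k) + (m / k + n / k) * k := by
        rw [add_mul]; linarith [h1, h2]
      rw [hmn, Nat.add_mul_mod_self_right, Nat.add_mul_div_right _ _ hkpos,
        Nat.mod_eq_of_lt hlt, Nat.div_eq_of_lt hlt, zero_add, add_mul]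
      have := hin (m % k) (n % k) hr1 hr2 hlt
      linarith
    · push_neg at hlt
      have hlt2 : m % k + n % k - k < k := by omega
      have hmn : m + n = (m % k + n % k - k) + (m / k + n / k + 1) * k := by
        rw [add_mul, one_mul]
        have : m % k + n % k - k + k = m % k + n % k := by omega
        nlinarith [h1, h2]
      rw [hmn, Nat.add_mul_mod_self_right, Nat.add_mul_div_right _ _ hkpos,
        Nat.mod_eq_of_lt hlt2, Nat.div_eq_of_lt hlt2, zero_add, add_mul, add_mul, one_mul]
      have := hwrap (m % k) (n % k) hr1 hr2 hlt
      linarith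
  · intro f hf1 hfa hfadd n
    induction n using Nat.strong_induction_on with
    | _ n ih =>
      intro hn
      by_cases hnk : n ≤ k
      · rw [part1 n hnk, hfa n hn hnk]
      · push_neg at hnk
        have hstep : g n = g (n - k) + a k := by
          rw [hg, hg]
          have hn' : n = (n - k) + k := by omega
          rw [hn']
          rw [Nat.add_mod_right, Nat.add_div_right _ hkpos]
          simp only [Nat.add_sub_cancel]
          ring
        have hih := ih (n - k) (by omega) (by omega)
        have hadd := hfadd (n - k) k (by omega) (by omega)
        have hfk : f k = a k := hfa k (by omega) le_rfl
        have hnk' : n - k + k = n := by omega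
        rw [hnk'] at hadd
        rw [hstep]
        linarith
end

section
/- Let k ≥ 2 and a ∈ ℕ. Define g : ℕ → ℕ by g(n) = (n div k)·a. Then g(1) = 0, g(i) = 0 for 1 ≤ i < k, g(k) = a, g(m+n) ≥ g(m) + g(n) for all m, n, and g is minimal with these properties: every f : ℕ → ℕ with f(1) = 0, f(i) = 0 for 1 ≤ i < k, f(k) = a, and f(m+n) ≥ f(m) + f(n) for all m, n ≥ 1 satisfies g(n) ≤ f(n) for all n ≥ 1. -/
/-- the minimal 2-fold operad in `(ℕ, max, +)` with starting terms
`0, …, 0, a` (value `a` at `k`) is `g n = (n / k) * a`. -/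
theorem minimal_operad_zero_start (k : ℕ) (hk : 2 ≤ k) (a : ℕ)
    (g : ℕ → ℕ) (hg : ∀ n, g n = (n / k) * a) :
    g 1 = 0 ∧ (∀ i, 1 ≤ i → i < k → g i = 0) ∧ g k = a ∧
      (∀ m n, g m + g n ≤ g (m + n)) ∧
      (∀ f : ℕ → ℕ, f 1 = 0 → (∀ i, 1 ≤ i → i < k → f i = 0) → f k = a →
        (∀ m n, 1 ≤ m → 1 ≤ n → f m + f n ≤ f (m + n)) →
        ∀ n, 1 ≤ n → g n ≤ f n) := by
  have hk0 : 0 < k := by omega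
  refine ⟨?_, ?_, ?_, ?_, ?_⟩
  · rw [hg]; simp [Nat.div_eq_of_lt (by omega : 1 < k)]
  · intro i h1 h2; rw [hg]; simp [Nat.div_eq_of_lt h2]
  · rw [hg]; simp [Nat.div_self hk0]
  · intro m n
    rw [hg, hg, hg]
    rw [← Nat.add_mul]
    apply Nat.mul_le_mul_right
    rw [Nat.le_div_iff_mul_le hk0, Nat.add_mul]
    have := Nat.div_mul_le_self m k
    have := Nat.div_mul_le_self n k
    omega
  · intro f hf1 hflt hfk hfsup n hn
    induction n using Nat.strong_induction_on with
    | _ n ih =>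
      rw [hg]
      by_cases hnk : n < k
      · rw [Nat.div_eq_of_lt hnk]; simp
      push_neg at hnk
      rcases Nat.eq_or_lt_of_le hnk with h | h
      · rw [← h, Nat.div_self hk0, one_mul, ← h] at *; omega
      · have h1 : 1 ≤ n - k := by omega
        have := ih (n - k) (by omega) h1
        have hs := hfsup k (n - k) (by omega) h1
        rw [hg] at this
        have hd : n / k = (n - k) / k + 1 := by
          conv_lhs => rw [show n = (n - k) + k by omega]
          rw [Nat.add_div_right _ hk0]
        have he : k + (n - k) = n := by omega
        rw [he] at hs
        rw [hd, Nat.add_mul, one_mul]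
        omega
end
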